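/- For parameters α ∈ [0,1], β ∈ (0,1], ν > α−1 and constants ℏ, ω, m > 0, define the quadrature operators q = √(ℏ/(2mω))(A + A†) and p = i√(ℏmω/2)(A† − A). In the vacuum state e_0 the expectations ⟨e_0, q e_0⟩ and ⟨e_0, p e_0⟩ vanish, the variances are (Δq)₀² = (ℏ/(2mω))[1]_{α,β,ν} and (Δp)₀² = (ℏmω/2)[1]_{α,β,ν}, and the uncertainty product equals (Δq)₀(Δp)₀ = (ℏ/2) · (Γ(β+1)/Γ(β+1−α)) · (Γ(β+1−α+ν)/Γ(1−α+ν)). -/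

import Mathlib

/-- The generalized factorial `[n]_{α,β,ν}!`. -/
noncomputable def genFact (α β ν : ℝ) (n : ℕ) : ℝ :=
  (∏ i ∈ Finset.Icc 1 n, Real.Gamma (β * i + 1) / Real.Gamma (β * i + 1 - α)) *
    (Real.Gamma (β * n + 1 - α + ν) / Real.Gamma (1 - α + ν))

/-- The box function `[n]_{α,β,ν}`, with `[0] = 0`. -/
noncomputable def box (α β ν : ℝ) : ℕ → ℝ
  | 0 => 0
  | n + 1 =>
      (Real.Gamma (β * (n + 1) + 1) / Real.Gamma (β * (n + 1) + 1 - α)) *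
        (Real.Gamma (β * (n + 1) + 1 - α + ν) / Real.Gamma (β * n + 1 - α + ν))

/-- The deformed annihilation operator on complex sequences. -/
noncomputable def annOp (α β ν : ℝ) (f : ℕ → ℂ) : ℕ → ℂ :=
  fun n => (Real.sqrt (box α β ν (n + 1)) : ℂ) * f (n + 1)

/-- The deformed creation operator on complex sequences. -/
noncomputable def creOp (α β ν : ℝ) (f : ℕ → ℂ) : ℕ → ℂ
  | 0 => 0
  | n + 1 => (Real.sqrt (box α β ν (n + 1)) : ℂ) * f n

/-- The standard basis sequence `e n`. -/
def basisSeq (n : ℕ) : ℕ → ℂ := fun m => if m = n then 1 else 0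
/-- The ℓ² inner product on sequences (conjugate-linear in the first slot). -/
noncomputable def seqInner (f g : ℕ → ℂ) : ℂ := ∑' n : ℕ, (starRingEnd ℂ) (f n) * g n

/-- The position quadrature operator. -/
noncomputable def quadQ (α β ν ℏ ω m : ℝ) (f : ℕ → ℂ) : ℕ → ℂ :=
  fun n => (Real.sqrt (ℏ / (2 * m * ω)) : ℂ) * (annOp α β ν f n + creOp α β ν f n)

/-- The momentum quadrature operator. -/
noncomputable def quadP (α β ν ℏ ω m : ℝ) (f : ℕ → ℂ) : ℕ → ℂ :=
  fun n => Complex.I * (Real.sqrt (ℏ * m * ω / 2) : ℂ) * (creOp α β ν f n - annOp α β ν f n)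

theorem vacuum_quadrature_fluctuations (α β ν ℏ ω m : ℝ) (hα0 : 0 ≤ α) (hα1 : α ≤ 1)
    (hβ0 : 0 < β) (hβ1 : β ≤ 1) (hν : ν > α - 1) (hℏ : 0 < ℏ) (hω : 0 < ω) (hm : 0 < m) :
    seqInner (basisSeq 0) (quadQ α β ν ℏ ω m (basisSeq 0)) = 0 ∧
    seqInner (basisSeq 0) (quadP α β ν ℏ ω m (basisSeq 0)) = 0 ∧
    seqInner (basisSeq 0) (quadQ α β ν ℏ ω m (quadQ α β ν ℏ ω m (basisSeq 0))) -
        (seqInner (basisSeq 0) (quadQ α β ν ℏ ω m (basisSeq 0))) ^ 2 =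
      ((ℏ / (2 * m * ω) * box α β ν 1 : ℝ) : ℂ) ∧
    seqInner (basisSeq 0) (quadP α β ν ℏ ω m (quadP α β ν ℏ ω m (basisSeq 0))) -
        (seqInner (basisSeq 0) (quadP α β ν ℏ ω m (basisSeq 0))) ^ 2 =
      ((ℏ * m * ω / 2 * box α β ν 1 : ℝ) : ℂ) ∧
    Real.sqrt (ℏ / (2 * m * ω) * box α β ν 1) * Real.sqrt (ℏ * m * ω / 2 * box α β ν 1) =
      ℏ / 2 * (Real.Gamma (β + 1) / Real.Gamma (β + 1 - α)) *
        (Real.Gamma (β + 1 - α + ν) / Real.Gamma (1 - α + ν)) := by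
  have hb1 : box α β ν 1 = (Real.Gamma (β + 1) / Real.Gamma (β + 1 - α)) *
      (Real.Gamma (β + 1 - α + ν) / Real.Gamma (1 - α + ν)) := by
    simp only [box]
    norm_num
  have hb1nn : 0 ≤ box α β ν 1 := by
    rw [hb1]
    have g1 := Real.Gamma_pos_of_pos (show (0:ℝ) < β + 1 by linarith)
    have g2 := Real.Gamma_pos_of_pos (show (0:ℝ) < β + 1 - α by linarith)
    have g3 := Real.Gamma_pos_of_pos (show (0:ℝ) < β + 1 - α + ν by linarith)
    have g4 := Real.Gamma_pos_of_pos (show (0:ℝ) < 1 - α + ν by linarith)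
    positivity
  have hsi : ∀ g : ℕ → ℂ, seqInner (basisSeq 0) g = g 0 := by
    intro g
    unfold seqInner
    rw [tsum_eq_single 0]
    · simp [basisSeq]
    · intro n hn; simp [basisSeq, hn]
  have hq0 : quadQ α β ν ℏ ω m (basisSeq 0) 0 = 0 := by
    simp [quadQ, annOp, creOp, basisSeq]
  have hp0 : quadP α β ν ℏ ω m (basisSeq 0) 0 = 0 := by
    simp [quadP, annOp, creOp, basisSeq]
  have hsq : ((Real.sqrt (box α β ν 1) : ℂ)) * ((Real.sqrt (box α β ν 1) : ℂ))
      = ((box α β ν 1 : ℝ) : ℂ) := by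
    rw [← Complex.ofReal_mul, Real.mul_self_sqrt hb1nn]
  have hc1 : ((Real.sqrt (ℏ / (2 * m * ω)) : ℂ)) * ((Real.sqrt (ℏ / (2 * m * ω)) : ℂ))
      = ((ℏ / (2 * m * ω) : ℝ) : ℂ) := by
    rw [← Complex.ofReal_mul, Real.mul_self_sqrt (by positivity)]
  have hc2 : ((Real.sqrt (ℏ * m * ω / 2) : ℂ)) * ((Real.sqrt (ℏ * m * ω / 2) : ℂ))
      = ((ℏ * m * ω / 2 : ℝ) : ℂ) := by
    rw [← Complex.ofReal_mul, Real.mul_self_sqrt (by positivity)]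
  refine ⟨by rw [hsi, hq0], by rw [hsi, hp0], ?_, ?_, ?_⟩
  · rw [hsi, hsi, hq0]
    simp only [quadQ, annOp, creOp, basisSeq]
    norm_num
    ring_nf
    rw [sq, ← Complex.ofReal_mul, Real.mul_self_sqrt (by positivity), sq, hsq]
    push_cast
    ring
  · rw [hsi, hsi, hp0]
    simp only [quadP, annOp, creOp, basisSeq]
    norm_num
    ring_nf
    rw [Complex.I_sq,
      show ((Real.sqrt (ℏ * m * ω) : ℂ)) ^ 2 = ((ℏ * m * ω : ℝ) : ℂ) by
        rw [sq, ← Complex.ofReal_mul, Real.mul_self_sqrt (by positivity)],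
      show (((Real.sqrt 2 : ℝ) : ℂ))⁻¹ ^ 2 = ((2 : ℝ) : ℂ)⁻¹ by
        rw [inv_pow, sq, ← Complex.ofReal_mul, Real.mul_self_sqrt (by norm_num)],
      show ((Real.sqrt (box α β ν 1) : ℂ)) ^ 2 = ((box α β ν 1 : ℝ) : ℂ) by rw [sq, hsq]]
    push_cast
    ring
  · have key : ℏ / (2 * m * ω) * box α β ν 1 * (ℏ * m * ω / 2 * box α β ν 1)
        = (ℏ / 2 * box α β ν 1) ^ 2 := by
      field_simp
    rw [← Real.sqrt_mul (by positivity), key, Real.sqrt_sq (by positivity), hb1]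
    ring
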